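/- Let $c > 1$ and let $a : \mathbb{N} \to \mathbb{N}$ satisfy $a(x+1) > c \cdot a(x)$ for all $x$. Then for almost every $\alpha \in [0,1]$ (with respect to Lebesgue measure) the following holds: for every $\epsilon > 0$ there is a constant $C$ (depending on $c$, $\alpha$, $\epsilon$) such that for every positive integer $N$ and every real number $\beta$, the number of integers $x < N$ with $\|\alpha a(x) - \beta\| < 1/N$ is at most $C N^{\epsilon}$. -/

import Mathlib

open MeasureTheory Finset
open scoped ENNReal NNReal

private lemma round_shift (y : ℝ) (z : ℤ) : |y + z - round (y + z)| = |y - round y| := by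
  rw [round_add_intCast]
  push_cast
  ring_nf

private lemma round_tri (y z : ℝ) :
    |y + z - round (y + z)| ≤ |y - round y| + |z - round z| := by
  calc |y + z - round (y + z)| ≤ |y + z - ((round y + round z : ℤ) : ℝ)| :=
        round_le _ _
    _ ≤ |y - round y| + |z - round z| := by
        push_cast
        rw [show y + z - ((round y : ℝ) + (round z : ℝ)) = (y - round y) + (z - round z) by ring]
        exact abs_add_le _ _

private lemma grid_lemma (N : ℕ) (hN : 1 ≤ N) (β : ℝ) :
    ∃ j : ℕ, j < N ∧ ∀ θ : ℝ, |θ - β - round (θ - β)| < 1 / N →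
      |θ - j / N - round (θ - j / N)| < 2 / N := by
  have hN0 : (0 : ℝ) < N := by exact_mod_cast hN
  refine ⟨⌊(N : ℝ) * Int.fract β⌋₊, ?_, ?_⟩
  · rw [Nat.floor_lt (mul_nonneg (le_of_lt hN0) (Int.fract_nonneg β))]
    calc (N : ℝ) * Int.fract β < N * 1 := by
          have := Int.fract_lt_one β
          have := Int.fract_nonneg β
          nlinarith
      _ = N := by ring
  · intro θ hθ
    set j : ℕ := ⌊(N : ℝ) * Int.fract β⌋₊ with hj
    set w : ℝ := Int.fract β - j / N with hw
    have hw0 : 0 ≤ w := by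
      rw [hw, sub_nonneg, div_le_iff₀ hN0, mul_comm]
      exact Nat.floor_le (mul_nonneg (le_of_lt hN0) (Int.fract_nonneg β))
    have hw1 : w < 1 / N := by
      rw [hw, sub_lt_iff_lt_add, ← add_div, lt_div_iff₀ hN0, mul_comm]
      have := Nat.lt_floor_add_one ((N : ℝ) * Int.fract β)
      push_cast at this ⊢
      linarith
    have key : θ - j / N = ((θ - β) + (⌊β⌋ : ℤ)) + w := by
      rw [hw]
      have h1 := Int.self_sub_floor β
      push_cast
      linarith
    rw [key]
    calc |(θ - β + (⌊β⌋ : ℤ)) + w - round ((θ - β + (⌊β⌋ : ℤ)) + w)|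
        ≤ |(θ - β + (⌊β⌋ : ℤ)) - round (θ - β + (⌊β⌋ : ℤ))| + |w - round w| := round_tri _ _
      _ = |θ - β - round (θ - β)| + |w - round w| := by rw [round_shift]
      _ ≤ |θ - β - round (θ - β)| + |w| := by
          have := round_le w (0 : ℤ)
          simp only [Int.cast_zero, sub_zero] at this
          linarith
      _ < 1 / N + 1 / N := by
          have : |w| < 1 / N := by rw [abs_of_nonneg hw0]; exact hw1
          linarith
      _ = 2 / N := by ring


private lemma exists_spaced (s : ℕ) (hs : 0 < s) :
    ∀ (m : ℕ) (T : Finset ℕ), m * s ≤ T.card →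
      ∃ g : ℕ → ℕ, (∀ i, i < m → g i ∈ T) ∧ (∀ i j, i < j → j < m → g i + s ≤ g j) := by
  intro m
  induction m with
  | zero => exact fun T _ => ⟨fun _ => 0, by omega, by omega⟩
  | succ m ih =>
    intro T hT
    have hmul : (m + 1) * s = m * s + s := by ring
    have hTne : T.Nonempty := by
      rw [← Finset.card_pos]; omega
    set x := T.min' hTne with hx
    set T' := T.filter (fun y => x + s ≤ y) with hT'
    have hsub : T.filter (fun y => ¬ (x + s ≤ y)) ⊆ Finset.Ico x (x + s) := by
      intro y hy
      rw [Finset.mem_filter] at hy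
      rw [Finset.mem_Ico]
      exact ⟨T.min'_le y hy.1, by omega⟩
    have hcard : m * s ≤ T'.card := by
      have h1 := Finset.card_filter_add_card_filter_not
        (s := T) (p := fun y => x + s ≤ y)
      rw [← hT'] at h1
      have h2 : (T.filter (fun y => ¬ (x + s ≤ y))).card ≤ s := by
        calc (T.filter (fun y => ¬ (x + s ≤ y))).card ≤ (Finset.Ico x (x + s)).card :=
              Finset.card_le_card hsub
          _ = s := by rw [Nat.card_Ico]; omega
      omega
    obtain ⟨g', hg'1, hg'2⟩ := ih T' hcard
    refine ⟨fun i => match i with | 0 => x | (i + 1) => g' i, ?_, ?_⟩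
    · intro i hi
      match i with
      | 0 => exact T.min'_mem hTne
      | (i + 1) =>
        have : g' i ∈ T' := hg'1 _ (by omega)
        rw [hT', Finset.mem_filter] at this
        exact this.1
    · intro i j hij hj
      match i, j with
      | 0, (j + 1) =>
        have hg : g' j ∈ T' := hg'1 _ (by omega)
        rw [hT', Finset.mem_filter] at hg
        exact hg.2
      | (i + 1), (j + 1) =>
        exact hg'2 _ _ (by omega) (by omega)

private lemma lac_growth (c : ℝ) (hc : 1 < c) (a : ℕ → ℕ)
    (hlac : ∀ n, c * a n < a (n + 1)) (x : ℕ) :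
    ∀ d, c ^ d * a x ≤ a (x + d) := by
  intro d
  induction d with
  | zero => simp
  | succ d ih =>
    have hc0 : (0 : ℝ) < c := lt_trans one_pos hc
    calc c ^ (d + 1) * a x = c * (c ^ d * a x) := by ring
      _ ≤ c * a (x + d) := by nlinarith
      _ ≤ a (x + d + 1) := le_of_lt (hlac _)

private lemma a_strictMono (c : ℝ) (hc : 1 < c) (a : ℕ → ℕ) (ha : ∀ n, 0 < a n)
    (hlac : ∀ n, c * a n < a (n + 1)) : StrictMono a := by
  apply strictMono_nat_of_lt_succ
  intro n
  have h := hlac n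
  have h2 : (a n : ℝ) < a (n + 1) := by
    have : (a n : ℝ) ≤ c * a n := by nlinarith [ha n, (by exact_mod_cast (ha n).le : (0:ℝ) ≤ a n)]
    linarith
  exact_mod_cast h2

private lemma factorial_bound (M : ℕ) : M ^ M ≤ Nat.factorial (2 * M) := by
  have h1 : (2 * M).descFactorial M ≤ Nat.factorial (2 * M) := by
    have := Nat.factorial_mul_descFactorial (show M ≤ 2 * M by omega)
    calc (2 * M).descFactorial M ≤ Nat.factorial (2 * M - M) * (2 * M).descFactorial M :=
          Nat.le_mul_of_pos_left _ (Nat.factorial_pos _)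
      _ = Nat.factorial (2 * M) := this
  refine le_trans ?_ h1
  rw [Nat.descFactorial_eq_prod_range]
  calc M ^ M = ∏ _i ∈ range M, M := by rw [Finset.prod_const, Finset.card_range]
    _ ≤ ∏ i ∈ range M, (2 * M - i) := by
        apply Finset.prod_le_prod'
        intro i hi
        rw [Finset.mem_range] at hi
        omega

private lemma choose_bound (N m : ℕ) : (N.choose m : ℝ) * (Nat.factorial m : ℝ) ≤ (N : ℝ) ^ m := by
  have h : Nat.factorial m * N.choose m ≤ N ^ m :=
    le_trans (le_of_eq (Nat.descFactorial_eq_factorial_mul_choose N m).symm)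
      (Nat.descFactorial_le_pow N m)
  exact_mod_cast by linarith [(by exact_mod_cast h : (Nat.factorial m : ℝ) * N.choose m ≤ (N:ℝ) ^ m)]


private lemma cover_lemma (N : ℕ) (hN : 1 ≤ N) (β : ℝ) (m : ℕ) (A : ℕ → ℕ)
    (hA : ∀ k, 1 ≤ A k)
    (hgrow : ∀ k, k + 1 < m → (N : ℝ) * A k ≤ A (k + 1)) :
    volume ({α : ℝ | ∀ k, k < m → |α * A k - β - round (α * A k - β)| < 2 / N} ∩ Set.Icc 0 1)
      ≤ ENNReal.ofReal ((24 / N) ^ m) := by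
  have hN0 : (0 : ℝ) < N := by exact_mod_cast hN
  have hApos : ∀ k, (0 : ℝ) < A k := fun k => by exact_mod_cast hA k
  set L : ℕ → ℝ := fun k => if k = 0 then 1 else 4 / (N * A (k - 1)) with hLdef
  have hLpos : ∀ k, 0 < L k := by
    intro k
    cases k with
    | zero => norm_num [hLdef]
    | succ k =>
      simp only [hLdef, Nat.succ_ne_zero, if_false]
      have := hApos k
      positivity
  have main : ∀ k, k ≤ m → ∃ n : ℕ, ∃ u : ℕ → ℝ,
      (({α : ℝ | ∀ i, i < k → |α * A i - β - round (α * A i - β)| < 2 / N} ∩ Set.Icc 0 1)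
        ⊆ ⋃ t ∈ Finset.range n, Set.Icc (u t) (u t + L k)) ∧ (n : ℝ) * L k ≤ (24 / N) ^ k := by
    intro k
    induction k with
    | zero =>
      intro _
      refine ⟨1, fun _ => 0, ?_, by norm_num [hLdef]⟩
      intro α hα
      rw [Set.mem_iUnion₂]
      refine ⟨0, by simp, ?_⟩
      simpa [hLdef] using hα.2
    | succ k ih =>
      intro hk1
      obtain ⟨n, u, hcov, hbound⟩ := ih (by omega)
      have hkm : k < m := by omega
      have hA'0 : (0 : ℝ) < A k := hApos k
      have hLk1 : L (k + 1) = 4 / (N * A k) := by simp [hLdef]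
      have hLA : 1 ≤ L k * A k := by
        cases k with
        | zero =>
          have : (1 : ℝ) ≤ A 0 := by exact_mod_cast hA 0
          simpa [hLdef] using this
        | succ j =>
          have hg := hgrow j (by omega)
          have hAj := hApos j
          have hAj1 := hApos (j + 1)
          have hL : L (j + 1) = 4 / (N * A j) := by simp [hLdef]
          rw [hL, div_mul_eq_mul_div, le_div_iff₀ (by positivity)]
          nlinarith
      set K : ℕ := ⌈L k * (A k : ℝ)⌉₊ + 4 with hKdef
      have hKpos : 0 < K := by omega
      have hK6 : (K : ℝ) ≤ 6 * (L k * A k) := by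
        have h1 : (⌈L k * (A k : ℝ)⌉₊ : ℝ) < L k * A k + 1 := Nat.ceil_lt_add_one (by nlinarith)
        rw [hKdef]
        push_cast
        nlinarith
      set u' : ℕ → ℝ := fun i =>
        (((⌈u (i / K) * (A k : ℝ) - β - 2 / N⌉ : ℤ) : ℝ) + ((i % K : ℕ) : ℝ) + β - 2 / N) / A k
        with hu'
      refine ⟨n * K, u', ?_, ?_⟩
      · intro α hα
        obtain ⟨hball, hIcc⟩ := hα
        have hprev := hcov ⟨fun i hi => hball i (by omega), hIcc⟩
        rw [Set.mem_iUnion₂] at hprev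
        obtain ⟨t, ht', hαt⟩ := hprev
        have ht : t < n := Finset.mem_range.1 ht'
        set r : ℤ := round (α * (A k : ℝ) - β) with hr
        obtain ⟨hrb1, hrb2⟩ := abs_lt.1 (hball k (by omega))
        have hut : u t ≤ α := hαt.1
        have hut2 : α ≤ u t + L k := hαt.2
        have hmul1 : u t * A k ≤ α * A k := mul_le_mul_of_nonneg_right hut hA'0.le
        have hmul2 : α * (A k : ℝ) ≤ (u t + L k) * A k := mul_le_mul_of_nonneg_right hut2 hA'0.le
        have hceil : (⌈u t * (A k : ℝ) - β - 2 / N⌉ : ℤ) ≤ r := by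
          rw [Int.ceil_le]
          push_cast
          linarith
        set q : ℕ := (r - ⌈u t * (A k : ℝ) - β - 2 / N⌉).toNat with hq
        have hqr : ((q : ℤ)) = r - ⌈u t * (A k : ℝ) - β - 2 / N⌉ :=
          Int.toNat_of_nonneg (by omega)
        have hqrR : ((q : ℕ) : ℝ) = (r : ℝ) - (⌈u t * (A k : ℝ) - β - 2 / N⌉ : ℤ) := by
          exact_mod_cast congrArg (fun z : ℤ => (z : ℝ)) hqr
        have hqK : q < K := by
          have h1 : u t * (A k : ℝ) - β - 2 / N ≤ (⌈u t * (A k : ℝ) - β - 2 / N⌉ : ℤ) :=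
            Int.le_ceil _
          have h2 : L k * (A k : ℝ) ≤ (⌈L k * (A k : ℝ)⌉₊ : ℝ) := Nat.le_ceil _
          have h3 : 2 / (N : ℝ) ≤ 2 := by
            rw [div_le_iff₀ hN0]
            have : (1 : ℝ) ≤ N := by exact_mod_cast hN
            nlinarith
          have h5 : ((q : ℕ) : ℝ) < (K : ℝ) := by
            rw [hqrR]
            push_cast [hKdef]
            nlinarith
          exact_mod_cast h5
        rw [Set.mem_iUnion₂]
        refine ⟨K * t + q, ?_, ?_⟩
        · rw [Finset.mem_range]
          have hKt : K * (t + 1) = K * t + K := by ring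
          calc K * t + q < K * (t + 1) := by omega
            _ ≤ K * n := Nat.mul_le_mul_left K (by omega)
            _ = n * K := Nat.mul_comm _ _
        · have hdiv : (K * t + q) / K = t := by
            rw [Nat.mul_add_div hKpos, Nat.div_eq_of_lt hqK]
            omega
          have hmod : (K * t + q) % K = q := by
            rw [Nat.mul_add_mod, Nat.mod_eq_of_lt hqK]
          have hu'val : u' (K * t + q) = ((r : ℝ) + β - 2 / N) / A k := by
            rw [hu']
            simp only [hdiv, hmod]
            rw [hqrR]
            ring_nf
          constructor
          · rw [hu'val, div_le_iff₀ hA'0]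
            linarith
          · rw [hu'val, hLk1]
            have heq : ((r : ℝ) + β - 2 / N) / A k + 4 / (N * A k)
                = ((r : ℝ) + β + 2 / N) / A k := by
              field_simp
              ring
            rw [heq, le_div_iff₀ hA'0]
            linarith
      · rw [Nat.cast_mul, hLk1]
        calc (n : ℝ) * (K : ℝ) * (4 / (N * A k))
            ≤ (n : ℝ) * (6 * (L k * A k)) * (4 / (N * A k)) := by
              apply mul_le_mul_of_nonneg_right
                (mul_le_mul_of_nonneg_left hK6 (Nat.cast_nonneg n))
              positivity
          _ = (24 / N) * ((n : ℝ) * L k) := by field_simp; ring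
          _ ≤ (24 / N) * ((24 / N) ^ k) := by
              apply mul_le_mul_of_nonneg_left hbound
              positivity
          _ = (24 / N) ^ (k + 1) := by ring
  obtain ⟨n, u, hcov, hbound⟩ := main m le_rfl
  calc volume ({α : ℝ | ∀ k, k < m → |α * A k - β - round (α * A k - β)| < 2 / N}
        ∩ Set.Icc 0 1)
      ≤ volume (⋃ t ∈ Finset.range n, Set.Icc (u t) (u t + L m)) := measure_mono hcov
    _ ≤ ∑ t ∈ Finset.range n, volume (Set.Icc (u t) (u t + L m)) :=
        measure_biUnion_finset_le _ _
    _ = ∑ _t ∈ Finset.range n, ENNReal.ofReal (L m) := by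
        apply Finset.sum_congr rfl
        intro t _
        rw [Real.volume_Icc]
        congr 1
        ring
    _ = (n : ℕ) • ENNReal.ofReal (L m) := by rw [Finset.sum_const, Finset.card_range]
    _ = ENNReal.ofReal ((n : ℝ) * L m) := by
        rw [ENNReal.ofReal_mul (Nat.cast_nonneg n), ENNReal.ofReal_natCast, nsmul_eq_mul]
    _ ≤ ENNReal.ofReal ((24 / N) ^ m) := ENNReal.ofReal_le_ofReal hbound

section
variable (c : ℝ) (a : ℕ → ℕ)

private lemma quarter_pow (N M : ℕ) (hN : 1 ≤ N) (h : 3 * Real.log N ≤ M) :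
    ((1 : ℝ) / 4) ^ M ≤ 1 / (N : ℝ) ^ 3 := by
  have hN0 : (0 : ℝ) < N := by exact_mod_cast hN
  have hlog4 : (1 : ℝ) ≤ Real.log 4 := by
    rw [Real.le_log_iff_exp_le (by norm_num)]
    have := Real.exp_one_lt_d9
    linarith
  have key : (N : ℝ) ^ 3 ≤ 4 ^ M := by
    have h1 : (N : ℝ) ^ 3 = Real.exp (3 * Real.log N) := by
      rw [show (3 : ℝ) * Real.log N = ((3 : ℕ) : ℝ) * Real.log N by norm_num,
        Real.exp_nat_mul, Real.exp_log hN0]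
    have h2 : (4 : ℝ) ^ M = Real.exp (M * Real.log 4) := by
      rw [Real.exp_nat_mul, Real.exp_log (by norm_num)]
    rw [h1, h2]
    apply Real.exp_le_exp.2
    have hM0 : (0 : ℝ) ≤ M := Nat.cast_nonneg M
    nlinarith
  rw [div_pow, one_pow]
  exact one_div_le_one_div_of_le (by positivity) key

end

private lemma real_chain (N M : ℕ) (hN : 1 ≤ N) (hM1 : 2304 ≤ M)
    (hM2 : 3 * Real.log N ≤ M) :
    (N : ℝ) * (N.choose (2 * M)) * ((24 / N) ^ (2 * M)) ≤ 1 / (N : ℝ) ^ 2 := by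
  have hN0 : (0 : ℝ) < N := by exact_mod_cast hN
  have hfact : (0 : ℝ) < (Nat.factorial (2 * M) : ℝ) := by exact_mod_cast Nat.factorial_pos _
  have hMpos : (0 : ℝ) < M := by exact_mod_cast (by omega : 0 < M)
  have hMM : (0 : ℝ) < (M : ℝ) ^ M := by positivity
  have e4 : (M : ℝ) ^ M ≤ (Nat.factorial (2 * M) : ℝ) := by exact_mod_cast factorial_bound M
  have step1 : (N.choose (2 * M) : ℝ) ≤ (N : ℝ) ^ (2 * M) / (Nat.factorial (2 * M)) :=
    (le_div_iff₀ hfact).2 (choose_bound N (2 * M))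
  calc (N : ℝ) * (N.choose (2 * M)) * ((24 / N) ^ (2 * M))
      ≤ (N : ℝ) * ((N : ℝ) ^ (2 * M) / (Nat.factorial (2 * M))) * ((24 / N) ^ (2 * M)) := by
        apply mul_le_mul_of_nonneg_right (mul_le_mul_of_nonneg_left step1 hN0.le)
        positivity
    _ = (N : ℝ) * ((576 : ℝ) ^ M / (Nat.factorial (2 * M))) := by
        rw [div_pow]
        field_simp
        rw [show (24 : ℝ) ^ (2 * M) = 576 ^ M by rw [pow_mul]; norm_num]
    _ ≤ (N : ℝ) * ((576 : ℝ) ^ M / (M : ℝ) ^ M) := by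
        apply mul_le_mul_of_nonneg_left _ hN0.le
        exact div_le_div_of_nonneg_left (by positivity) hMM e4
    _ = (N : ℝ) * ((576 / (M : ℝ)) ^ M) := by rw [div_pow]
    _ ≤ (N : ℝ) * ((1 / 4 : ℝ) ^ M) := by
        apply mul_le_mul_of_nonneg_left _ hN0.le
        apply pow_le_pow_left₀ (by positivity)
        rw [div_le_div_iff₀ hMpos (by norm_num)]
        have h2304 : (2304 : ℝ) ≤ M := by exact_mod_cast hM1
        nlinarith
    _ ≤ (N : ℝ) * (1 / (N : ℝ) ^ 3) := by
        apply mul_le_mul_of_nonneg_left (quarter_pow N M hN hM2) hN0.le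
    _ = 1 / (N : ℝ) ^ 2 := by field_simp

private lemma badN_bound (c : ℝ) (hc : 1 < c) (a : ℕ → ℕ) (ha : ∀ n, 0 < a n)
    (hlac : ∀ n, c * a n < a (n + 1)) (N M s : ℕ)
    (hM1 : 2304 ≤ M) (hM2 : 3 * Real.log N ≤ M) (hs : (N : ℝ) ≤ c ^ s) (hs0 : 0 < s) :
    volume.restrict (Set.Icc (0 : ℝ) 1) {α : ℝ | ∃ β : ℝ,
        2 * M * s ≤ {x : ℕ | x < N ∧ |α * a x - β - round (α * a x - β)| < 1 / N}.ncard}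
      ≤ ENNReal.ofReal (1 / (N : ℝ) ^ 2) := by
  classical
  rcases Nat.eq_zero_or_pos N with hN0 | hN1
  · subst hN0
    have hempty : {α : ℝ | ∃ β : ℝ,
        2 * M * s ≤ {x : ℕ | x < 0 ∧ |α * a x - β - round (α * a x - β)| < 1 / 0}.ncard} = ∅ := by
      ext α
      simp only [Set.mem_setOf_eq, Set.mem_empty_iff_false, iff_false, not_exists]
      intro β hβ
      have h0 : {x : ℕ | x < 0 ∧ |α * a x - β - round (α * a x - β)| < 1 / 0} = ∅ := by
        ext x; simp
      rw [h0, Set.ncard_empty] at hβ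
      have : 0 < 2 * M * s := by positivity
      omega
    rw [show ((0:ℕ):ℝ) = (0:ℝ) by norm_num] at *
    rw [hempty]
    simp
  have hNR : (1 : ℝ) ≤ N := by exact_mod_cast hN1
  have hN0R : (0 : ℝ) < N := by linarith
  set m : ℕ := 2 * M with hm
  set E : ℕ → ℕ → Set ℝ := fun j x =>
    {α : ℝ | |α * a x - (j : ℝ) / N - round (α * a x - (j : ℝ) / N)| < 2 / N} with hE
  set P : Finset (Finset ℕ) := ((Finset.range N).powersetCard m).filter
    (fun S => ∀ x ∈ S, ∀ y ∈ S, x < y → x + s ≤ y) with hP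
  set F : ℕ → Finset ℕ → Set ℝ := fun j S => (⋂ x ∈ S, E j x) ∩ Set.Icc 0 1 with hF
  have hincl : {α : ℝ | ∃ β : ℝ,
        2 * M * s ≤ {x : ℕ | x < N ∧ |α * a x - β - round (α * a x - β)| < 1 / N}.ncard}
        ∩ Set.Icc 0 1 ⊆ ⋃ j ∈ Finset.range N, ⋃ S ∈ P, F j S := by
    rintro α ⟨⟨β, hβ⟩, hIcc⟩
    obtain ⟨j, hj, hβj⟩ := grid_lemma N hN1 β
    set T : Finset ℕ := (Finset.range N).filter (fun x => α ∈ E j x) with hT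
    have hsub : {x : ℕ | x < N ∧ |α * a x - β - round (α * a x - β)| < 1 / N} ⊆ (↑T : Set ℕ) := by
      rintro x ⟨hx1, hx2⟩
      simp only [hT, Finset.coe_filter, Set.mem_setOf_eq, Finset.mem_range]
      exact ⟨hx1, hβj _ hx2⟩
    have hTcard : m * s ≤ T.card := by
      calc m * s = 2 * M * s := by rw [hm]
        _ ≤ {x : ℕ | x < N ∧ |α * a x - β - round (α * a x - β)| < 1 / N}.ncard := hβ
        _ ≤ (↑T : Set ℕ).ncard := Set.ncard_le_ncard hsub (Finset.finite_toSet T)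
        _ = T.card := Set.ncard_coe_finset T
    obtain ⟨g, hg1, hg2⟩ := exists_spaced s hs0 m T hTcard
    have hglt : ∀ i i', i < i' → i' < m → g i < g i' := fun i i' h1 h2 => by
      have := hg2 i i' h1 h2; omega
    set S : Finset ℕ := (Finset.range m).image g with hS
    have hScard : S.card = m := by
      rw [hS, Finset.card_image_of_injOn, Finset.card_range]
      intro i hi i' hi' heq
      rw [Finset.mem_coe, Finset.mem_range] at hi hi'
      rcases lt_trichotomy i i' with h | h | h
      · exact absurd heq (by have := hglt i i' h hi'; omega)
      · exact h
      · exact absurd heq.symm (by have := hglt i' i h hi; omega)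
    have hgT : ∀ i, i < m → g i ∈ T := hg1
    have hTsub : T ⊆ Finset.range N := Finset.filter_subset _ _
    have hSP : S ∈ P := by
      rw [hP, Finset.mem_filter, Finset.mem_powersetCard]
      refine ⟨⟨?_, hScard⟩, ?_⟩
      · intro x hx
        rw [hS, Finset.mem_image] at hx
        obtain ⟨i, hi, rfl⟩ := hx
        rw [Finset.mem_range] at hi
        exact hTsub (hgT i hi)
      · intro x hx y hy hxy
        rw [hS, Finset.mem_image] at hx hy
        obtain ⟨i, hi, rfl⟩ := hx
        obtain ⟨i', hi', rfl⟩ := hy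
        rw [Finset.mem_range] at hi hi'
        rcases lt_trichotomy i i' with h | h | h
        · exact hg2 i i' h hi'
        · subst h; omega
        · have := hglt i' i h hi; omega
    rw [Set.mem_iUnion₂]
    refine ⟨j, Finset.mem_range.2 hj, ?_⟩
    rw [Set.mem_iUnion₂]
    refine ⟨S, hSP, ?_, hIcc⟩
    rw [Set.mem_iInter₂]
    intro x hx
    rw [hS, Finset.mem_image] at hx
    obtain ⟨i, hi, rfl⟩ := hx
    rw [Finset.mem_range] at hi
    have := hgT i hi
    rw [hT, Finset.mem_filter] at this
    exact this.2
  have hvol : ∀ j : ℕ, ∀ S ∈ P, volume (F j S) ≤ ENNReal.ofReal ((24 / N) ^ m) := by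
    intro j S hSP
    rw [hP, Finset.mem_filter, Finset.mem_powersetCard] at hSP
    obtain ⟨⟨hSsub, hScard⟩, hSspace⟩ := hSP
    set f := S.orderEmbOfFin hScard with hf
    set A : ℕ → ℕ := fun k => if h : k < m then a (f ⟨k, h⟩) else 1 with hAdef
    have hA : ∀ k, 1 ≤ A k := by
      intro k
      rw [hAdef]
      dsimp only
      split
      · exact ha _
      · exact le_refl 1
    have hgrow : ∀ k, k + 1 < m → (N : ℝ) * A k ≤ A (k + 1) := by
      intro k hk
      have hk' : k < m := by omega
      rw [hAdef]
      dsimp only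
      rw [dif_pos hk', dif_pos hk]
      have hmem1 : (f ⟨k, hk'⟩ : ℕ) ∈ S := Finset.orderEmbOfFin_mem S hScard _
      have hmem2 : (f ⟨k + 1, hk⟩ : ℕ) ∈ S := Finset.orderEmbOfFin_mem S hScard _
      have hlt : (f ⟨k, hk'⟩ : ℕ) < (f ⟨k + 1, hk⟩ : ℕ) :=
        f.strictMono (Fin.mk_lt_mk.2 (Nat.lt_succ_self k))
      have hspace := hSspace _ hmem1 _ hmem2 hlt
      have h1 : (c : ℝ) ^ s * a (f ⟨k, hk'⟩) ≤ a ((f ⟨k, hk'⟩ : ℕ) + s) :=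
        lac_growth c hc a hlac _ s
      have h2 : (a ((f ⟨k, hk'⟩ : ℕ) + s) : ℝ) ≤ (a (f ⟨k + 1, hk⟩) : ℝ) := by
        exact_mod_cast (a_strictMono c hc a ha hlac).monotone hspace
      have hax : (0 : ℝ) ≤ (a (f ⟨k, hk'⟩) : ℝ) := Nat.cast_nonneg _
      nlinarith
    have hsub2 : F j S ⊆ {α : ℝ | ∀ k, k < m →
        |α * A k - (j : ℝ) / N - round (α * A k - (j : ℝ) / N)| < 2 / N} ∩ Set.Icc 0 1 := by
      rintro α ⟨hαE, hαI⟩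
      refine ⟨fun k hk => ?_, hαI⟩
      rw [hAdef]
      dsimp only
      rw [dif_pos hk]
      have hmem : (f ⟨k, hk⟩ : ℕ) ∈ S := Finset.orderEmbOfFin_mem S hScard _
      rw [Set.mem_iInter₂] at hαE
      exact hαE _ hmem
    calc volume (F j S) ≤ volume ({α : ℝ | ∀ k, k < m →
          |α * A k - (j : ℝ) / N - round (α * A k - (j : ℝ) / N)| < 2 / N} ∩ Set.Icc 0 1) :=
          measure_mono hsub2
      _ ≤ ENNReal.ofReal ((24 / N) ^ m) := cover_lemma N hN1 ((j : ℝ) / N) m A hA hgrow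
  rw [Measure.restrict_apply' measurableSet_Icc]
  have hPcard : (P.card : ℝ) ≤ (N.choose m : ℝ) := by
    have h1 : P.card ≤ ((Finset.range N).powersetCard m).card := Finset.card_filter_le _ _
    have h2 : ((Finset.range N).powersetCard m).card = N.choose m := by
      rw [Finset.card_powersetCard, Finset.card_range]
    exact_mod_cast h1.trans (le_of_eq h2)
  have hB0 : (0 : ℝ) ≤ (24 / N) ^ m := by positivity
  calc volume ({α : ℝ | ∃ β : ℝ,
        2 * M * s ≤ {x : ℕ | x < N ∧ |α * a x - β - round (α * a x - β)| < 1 / N}.ncard}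
        ∩ Set.Icc 0 1)
      ≤ volume (⋃ j ∈ Finset.range N, ⋃ S ∈ P, F j S) := measure_mono hincl
    _ ≤ ∑ j ∈ Finset.range N, volume (⋃ S ∈ P, F j S) := measure_biUnion_finset_le _ _
    _ ≤ ∑ j ∈ Finset.range N, ∑ S ∈ P, volume (F j S) :=
        Finset.sum_le_sum fun j _ => measure_biUnion_finset_le _ _
    _ ≤ ∑ _j ∈ Finset.range N, ∑ _S ∈ P, ENNReal.ofReal ((24 / N) ^ m) :=
        Finset.sum_le_sum fun j _ => Finset.sum_le_sum fun S hS => hvol j S hS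
    _ = (N : ℝ≥0∞) * ((P.card : ℝ≥0∞) * ENNReal.ofReal ((24 / N) ^ m)) := by
        rw [Finset.sum_const, Finset.sum_const, Finset.card_range, nsmul_eq_mul, nsmul_eq_mul]
    _ ≤ (N : ℝ≥0∞) * ((N.choose m : ℝ≥0∞) * ENNReal.ofReal ((24 / N) ^ m)) := by
        apply mul_le_mul_right (mul_le_mul_left ?_ _)
        exact_mod_cast Nat.cast_le.2 (by exact_mod_cast hPcard : P.card ≤ N.choose m)
    _ = ENNReal.ofReal ((N : ℝ) * ((N.choose m : ℝ) * ((24 / N) ^ m))) := by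
        rw [ENNReal.ofReal_mul (by positivity), ENNReal.ofReal_mul (by positivity),
          ENNReal.ofReal_natCast, ENNReal.ofReal_natCast]
    _ ≤ ENNReal.ofReal (1 / (N : ℝ) ^ 2) := by
        apply ENNReal.ofReal_le_ofReal
        have := real_chain N M hN1 hM1 hM2
        rw [hm]
        nlinarith [this]

private lemma K_le (c : ℝ) (hc : 1 < c) (ε : ℝ) (hε : 0 < ε) :
    ∃ N₄ : ℕ, 1 ≤ N₄ ∧ ∀ N : ℕ, N₄ ≤ N →
      ((2 * (2304 + ⌈3 * Real.log N⌉₊) * (1 + ⌈Real.log N / Real.log c⌉₊) : ℕ) : ℝ)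
        ≤ (N : ℝ) ^ ε := by
  have hlogc : 0 < Real.log c := Real.log_pos hc
  set δ : ℝ := ε / 4 with hδdef
  have hδ : 0 < δ := by positivity
  set C₁ : ℝ := 2 * (2305 + 3 / δ) * (2 + 1 / (δ * Real.log c)) with hC₁
  have hC₁pos : 0 < C₁ := by rw [hC₁]; positivity
  refine ⟨⌈C₁ ^ (2 / ε)⌉₊ + 1, by omega, ?_⟩
  intro N hN4
  have hN1 : 1 ≤ N := by omega
  have hNR : (1 : ℝ) ≤ N := by exact_mod_cast hN1
  have hN0R : (0 : ℝ) < N := by linarith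
  have hlogN : 0 ≤ Real.log N := Real.log_nonneg hNR
  set Q : ℝ := (N : ℝ) ^ δ with hQ
  have hQ1 : 1 ≤ Q := by
    rw [hQ]
    calc (1 : ℝ) = (N : ℝ) ^ (0 : ℝ) := (Real.rpow_zero _).symm
      _ ≤ (N : ℝ) ^ δ := Real.rpow_le_rpow_of_exponent_le hNR hδ.le
  have hQ0 : 0 < Q := lt_of_lt_of_le one_pos hQ1
  have hlog_le : Real.log N ≤ Q / δ := by
    have h1 : Real.log ((N : ℝ) ^ δ) = δ * Real.log N := Real.log_rpow hN0R δ
    have h2 : Real.log ((N : ℝ) ^ δ) ≤ Q - 1 := by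
      rw [← hQ]
      exact Real.log_le_sub_one_of_pos hQ0
    rw [h1] at h2
    rw [le_div_iff₀ hδ]
    nlinarith
  have hc1 : ((⌈3 * Real.log N⌉₊ : ℕ) : ℝ) < 3 * Real.log N + 1 :=
    Nat.ceil_lt_add_one (by positivity)
  have hc2 : ((⌈Real.log N / Real.log c⌉₊ : ℕ) : ℝ) < Real.log N / Real.log c + 1 :=
    Nat.ceil_lt_add_one (by positivity)
  have eA : (2304 : ℝ) + (⌈3 * Real.log N⌉₊ : ℕ) ≤ (2305 + 3 / δ) * Q := by
    have h3 : 3 * Real.log N ≤ 3 * (Q / δ) := by linarith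
    have h4 : 3 * (Q / δ) = (3 / δ) * Q := by ring
    nlinarith
  have eB : (1 : ℝ) + (⌈Real.log N / Real.log c⌉₊ : ℕ) ≤ (2 + 1 / (δ * Real.log c)) * Q := by
    have h5 : Real.log N / Real.log c ≤ (Q / δ) / Real.log c := by gcongr
    have h6 : (Q / δ) / Real.log c = (1 / (δ * Real.log c)) * Q := by
      field_simp
    nlinarith
  have hKQ : ((2 * (2304 + ⌈3 * Real.log N⌉₊) * (1 + ⌈Real.log N / Real.log c⌉₊) : ℕ) : ℝ)
      ≤ C₁ * (Q * Q) := by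
    push_cast
    calc (2 : ℝ) * (2304 + (⌈3 * Real.log N⌉₊ : ℕ)) * (1 + (⌈Real.log N / Real.log c⌉₊ : ℕ))
        ≤ 2 * ((2305 + 3 / δ) * Q) * ((2 + 1 / (δ * Real.log c)) * Q) := by
          have p1 : (0:ℝ) ≤ 2304 + (⌈3 * Real.log N⌉₊ : ℕ) := by positivity
          have p2 : (0:ℝ) ≤ 1 + (⌈Real.log N / Real.log c⌉₊ : ℕ) := by positivity
          have p3 : (0:ℝ) ≤ 2 * ((2305 + 3 / δ) * Q) := by positivity
          apply mul_le_mul _ eB p2 p3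
          apply mul_le_mul_of_nonneg_left eA (by norm_num)
      _ = C₁ * (Q * Q) := by rw [hC₁]; ring
  have hQQ : Q * Q = (N : ℝ) ^ (ε / 2) := by
    rw [hQ, ← Real.rpow_add hN0R]
    congr 1
    rw [hδdef]
    ring
  have hC₁N : C₁ ≤ (N : ℝ) ^ (ε / 2) := by
    have hNC : C₁ ^ (2 / ε) ≤ (N : ℝ) := by
      have h1 : C₁ ^ (2 / ε) ≤ (⌈C₁ ^ (2 / ε)⌉₊ : ℝ) := Nat.le_ceil _
      have h2 : ((⌈C₁ ^ (2 / ε)⌉₊ : ℕ) : ℝ) ≤ (N : ℝ) := by exact_mod_cast by omega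
      linarith
    calc C₁ = (C₁ ^ (2 / ε)) ^ (ε / 2) := by
          rw [← Real.rpow_mul hC₁pos.le, show (2 / ε) * (ε / 2) = 1 by field_simp,
            Real.rpow_one]
      _ ≤ (N : ℝ) ^ (ε / 2) := Real.rpow_le_rpow (Real.rpow_nonneg hC₁pos.le _) hNC (by positivity)
  have hfin : (N : ℝ) ^ (ε / 2) * (N : ℝ) ^ (ε / 2) = (N : ℝ) ^ ε := by
    rw [← Real.rpow_add hN0R]
    norm_num
  calc ((2 * (2304 + ⌈3 * Real.log N⌉₊) * (1 + ⌈Real.log N / Real.log c⌉₊) : ℕ) : ℝ)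
      ≤ C₁ * (Q * Q) := hKQ
    _ = C₁ * (N : ℝ) ^ (ε / 2) := by rw [hQQ]
    _ ≤ (N : ℝ) ^ (ε / 2) * (N : ℝ) ^ (ε / 2) :=
        mul_le_mul_of_nonneg_right hC₁N (Real.rpow_nonneg hN0R.le _)
    _ = (N : ℝ) ^ ε := hfin

private lemma key_eps (c : ℝ) (hc : 1 < c) (a : ℕ → ℕ) (ha : ∀ n, 0 < a n)
    (hlac : ∀ n, c * a n < a (n + 1)) (ε : ℝ) (hε : 0 < ε) :
    ∀ᵐ α ∂(volume.restrict (Set.Icc (0 : ℝ) 1)), ∃ C : ℝ, 0 ≤ C ∧ ∀ N : ℕ, 1 ≤ N → ∀ β : ℝ,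
      ({x : ℕ | x < N ∧ |α * a x - β - round (α * a x - β)| < 1 / N}.ncard : ℝ)
        ≤ C * (N : ℝ) ^ ε := by
  have hlogc : 0 < Real.log c := Real.log_pos hc
  have hc0 : (0 : ℝ) < c := by linarith
  set Bad : ℕ → Set ℝ := fun N => {α : ℝ | ∃ β : ℝ,
      2 * (2304 + ⌈3 * Real.log N⌉₊) * (1 + ⌈Real.log N / Real.log c⌉₊) ≤
        {x : ℕ | x < N ∧ |α * a x - β - round (α * a x - β)| < 1 / N}.ncard} with hBad
  have hμ : ∀ N : ℕ, volume.restrict (Set.Icc (0 : ℝ) 1) (Bad N)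
      ≤ ENNReal.ofReal (1 / (N : ℝ) ^ 2) := by
    intro N
    apply badN_bound c hc a ha hlac N (2304 + ⌈3 * Real.log N⌉₊) (1 + ⌈Real.log N / Real.log c⌉₊)
    · omega
    · have := Nat.le_ceil (3 * Real.log N)
      push_cast
      linarith
    · rcases Nat.eq_zero_or_pos N with h0 | h1
      · subst h0
        simp only [Nat.cast_zero]
        positivity
      · have hNR : (1 : ℝ) ≤ N := by exact_mod_cast h1
        have hN0R : (0 : ℝ) < N := by linarith
        have h2 : Real.log N ≤ ((1 + ⌈Real.log N / Real.log c⌉₊ : ℕ) : ℝ) * Real.log c := by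
          have h3 := Nat.le_ceil (Real.log N / Real.log c)
          have h4 : Real.log N / Real.log c ≤ ((1 + ⌈Real.log N / Real.log c⌉₊ : ℕ) : ℝ) := by
            push_cast
            linarith
          rw [div_le_iff₀ hlogc] at h4
          linarith
        calc (N : ℝ) = Real.exp (Real.log N) := (Real.exp_log hN0R).symm
          _ ≤ Real.exp (((1 + ⌈Real.log N / Real.log c⌉₊ : ℕ) : ℝ) * Real.log c) :=
              Real.exp_le_exp.2 h2
          _ = c ^ (1 + ⌈Real.log N / Real.log c⌉₊ : ℕ) := by
              rw [Real.exp_nat_mul, Real.exp_log hc0]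
    · omega
  have htsum : (∑' N, volume.restrict (Set.Icc (0 : ℝ) 1) (Bad N)) ≠ ⊤ := by
    have hsummable : Summable (fun N : ℕ => 1 / (N : ℝ) ^ 2) :=
      Real.summable_one_div_nat_pow.mpr one_lt_two
    have h1 : (∑' N, volume.restrict (Set.Icc (0 : ℝ) 1) (Bad N))
        ≤ ∑' N : ℕ, ENNReal.ofReal (1 / (N : ℝ) ^ 2) := ENNReal.tsum_le_tsum hμ
    have h2 : ∑' N : ℕ, ENNReal.ofReal (1 / (N : ℝ) ^ 2)
        = ENNReal.ofReal (∑' N : ℕ, 1 / (N : ℝ) ^ 2) :=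
      (ENNReal.ofReal_tsum_of_nonneg (fun N => by positivity) hsummable).symm
    rw [h2] at h1
    exact ne_top_of_le_ne_top ENNReal.ofReal_ne_top h1
  obtain ⟨N₄, hN₄1, hN₄⟩ := K_le c hc ε hε
  filter_upwards [MeasureTheory.ae_eventually_notMem htsum] with α hα
  rw [Filter.eventually_atTop] at hα
  obtain ⟨N₂, hN₂⟩ := hα
  refine ⟨((max N₂ N₄ + 1 : ℕ) : ℝ), Nat.cast_nonneg _, ?_⟩
  intro N hN β
  have hNR : (1 : ℝ) ≤ N := by exact_mod_cast hN
  have hrpow1 : (1 : ℝ) ≤ (N : ℝ) ^ ε := by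
    calc (1 : ℝ) = (N : ℝ) ^ (0 : ℝ) := (Real.rpow_zero _).symm
      _ ≤ _ := Real.rpow_le_rpow_of_exponent_le hNR hε.le
  rcases lt_or_ge N (max N₂ N₄ + 1) with hlt | hge
  · have hsub : {x : ℕ | x < N ∧ |α * a x - β - round (α * a x - β)| < 1 / N}
        ⊆ (↑(Finset.range N) : Set ℕ) := by
      rintro x ⟨hx, _⟩
      simp [hx]
    have hcount : ({x : ℕ | x < N ∧ |α * a x - β - round (α * a x - β)| < 1 / N}.ncard : ℝ)
        ≤ N := by
      have h := Set.ncard_le_ncard hsub (Finset.finite_toSet _)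
      rw [Set.ncard_coe_finset, Finset.card_range] at h
      exact_mod_cast h
    calc ({x : ℕ | x < N ∧ |α * a x - β - round (α * a x - β)| < 1 / N}.ncard : ℝ)
        ≤ N := hcount
      _ ≤ ((max N₂ N₄ + 1 : ℕ) : ℝ) := by exact_mod_cast hlt.le
      _ = ((max N₂ N₄ + 1 : ℕ) : ℝ) * 1 := (mul_one _).symm
      _ ≤ ((max N₂ N₄ + 1 : ℕ) : ℝ) * (N : ℝ) ^ ε :=
          mul_le_mul_of_nonneg_left hrpow1 (Nat.cast_nonneg _)
  · have hnotbad : α ∉ Bad N := hN₂ N (by omega)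
    rw [hBad] at hnotbad
    simp only [Set.mem_setOf_eq, not_exists] at hnotbad
    have hlt2 : {x : ℕ | x < N ∧ |α * a x - β - round (α * a x - β)| < 1 / N}.ncard
        < 2 * (2304 + ⌈3 * Real.log N⌉₊) * (1 + ⌈Real.log N / Real.log c⌉₊) := by
      by_contra h
      exact hnotbad β (le_of_not_gt h)
    have hK := hN₄ N (by omega)
    calc ({x : ℕ | x < N ∧ |α * a x - β - round (α * a x - β)| < 1 / N}.ncard : ℝ)
        ≤ ((2 * (2304 + ⌈3 * Real.log N⌉₊) * (1 + ⌈Real.log N / Real.log c⌉₊) : ℕ) : ℝ) := by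
          exact_mod_cast hlt2.le
      _ ≤ (N : ℝ) ^ ε := hK
      _ = 1 * (N : ℝ) ^ ε := (one_mul _).symm
      _ ≤ ((max N₂ N₄ + 1 : ℕ) : ℝ) * (N : ℝ) ^ ε := by
          apply mul_le_mul_of_nonneg_right _ (by positivity)
          exact_mod_cast (by omega : 1 ≤ max N₂ N₄ + 1)


/-- Small fractional parts: for a lacunary sequence `a` with ratio `c > 1`, for almost
every `α ∈ [0,1]`, for every `ε > 0` there is a constant `C` such that for every `N ≥ 1`
and every `β`, the number of `x < N` with `‖α * a x - β‖ < 1/N` is at most `C * N^ε`,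
where `‖·‖` is the distance to the nearest integer. -/
theorem stmt6 (c : ℝ) (hc : 1 < c) (a : ℕ → ℕ) (ha : ∀ n, 0 < a n)
    (hlac : ∀ n, c * a n < a (n + 1)) :
    ∀ᵐ α ∂(volume.restrict (Set.Icc (0 : ℝ) 1)),
      ∀ ε : ℝ, 0 < ε → ∃ C : ℝ, ∀ N : ℕ, 1 ≤ N → ∀ β : ℝ,
        (Set.ncard {x : ℕ | x < N ∧ |α * a x - β - round (α * a x - β)| < 1 / N} : ℝ)
          ≤ C * (N : ℝ) ^ ε := by
  have key : ∀ k : ℕ, ∀ᵐ α ∂(volume.restrict (Set.Icc (0 : ℝ) 1)),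
      ∃ C : ℝ, 0 ≤ C ∧ ∀ N : ℕ, 1 ≤ N → ∀ β : ℝ,
        ({x : ℕ | x < N ∧ |α * a x - β - round (α * a x - β)| < 1 / N}.ncard : ℝ)
          ≤ C * (N : ℝ) ^ (1 / (k + 1 : ℝ)) :=
    fun k => key_eps c hc a ha hlac (1 / (k + 1 : ℝ)) (by positivity)
  filter_upwards [MeasureTheory.ae_all_iff.2 key] with α hα
  intro ε hε
  set k : ℕ := ⌈1 / ε⌉₊ with hk
  have hkε : 1 / (k + 1 : ℝ) ≤ ε := by
    rw [div_le_iff₀ (by positivity)]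
    have h1 : 1 / ε ≤ (k : ℝ) := Nat.le_ceil _
    rw [div_le_iff₀ hε] at h1
    nlinarith
  obtain ⟨C, hC0, hC⟩ := hα k
  refine ⟨C, fun N hN β => ?_⟩
  have hNR : (1 : ℝ) ≤ N := by exact_mod_cast hN
  calc ({x : ℕ | x < N ∧ |α * a x - β - round (α * a x - β)| < 1 / N}.ncard : ℝ)
      ≤ C * (N : ℝ) ^ (1 / (k + 1 : ℝ)) := hC N hN β
    _ ≤ C * (N : ℝ) ^ ε :=
        mul_le_mul_of_nonneg_left (Real.rpow_le_rpow_of_exponent_le hNR hkε) hC0
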